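/- In the setting of Theorem (quantum Chamber Ansatz): assuming (Φ_𝐢 ∘ η_{w,q}^{-1})([D_{w_{≤j}ϖ_{i_j}, ϖ_{i_j}}]) = (∏_{m=1}^{j} q_{i_m}^{d_m^{(j)}(d_m^{(j)}+1)/2}) t_1^{-d_1^{(j)}}⋯t_j^{-d_j^{(j)}} with d_m^{(j)} = ⟨w_{≤m}h_{i_m}, w_{≤j}ϖ_{i_j}⟩ for all j ≤ k, the variable t_k is recovered up to a power of q as t_k ≃ (D'_{w_{≤k-1}ϖ_{i_k},ϖ_{i_k}})^{-1}(D'_{w_{≤k}ϖ_{i_k},ϖ_{i_k}})^{-1} ∏_{j ≠ i_k}(D'_{w_{≤k}ϖ_j,ϖ_j})^{-a_{j,i_k}}, where D' denotes the corresponding monomial; i.e., the product of those Laurent monomials in t_1,…,t_ℓ equals t_k up to a power of q. -/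

import Mathlib

/-- Simple reflection on the weight lattice: `s_i(μ) = μ - ⟨h_i, μ⟩ α_i`. -/
def sRef {I P Pc : Type*} [AddCommGroup P] [AddCommGroup Pc]
    (pair : Pc →+ P →+ ℤ) (α : I → P) (hc : I → Pc) (i : I) (μ : P) : P :=
  μ - pair (hc i) μ • α i

/-- Simple reflection on the coweight lattice: `s_i(x) = x - ⟨x, α_i⟩ h_i`. -/
def sRefC {I P Pc : Type*} [AddCommGroup P] [AddCommGroup Pc]
    (pair : Pc →+ P →+ ℤ) (α : I → P) (hc : I → Pc) (i : I) (x : Pc) : Pc :=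
  x - pair x (α i) • hc i

/-- `w_{≤m} = s_{i_1}⋯s_{i_m}` acting on weights (word `idx` indexed from 1). -/
def wle {I P Pc : Type*} [AddCommGroup P] [AddCommGroup Pc]
    (pair : Pc →+ P →+ ℤ) (α : I → P) (hc : I → Pc) (idx : ℕ → I) : ℕ → P → P
  | 0 => id
  | m + 1 => (wle pair α hc idx m) ∘ sRef pair α hc (idx (m + 1))

/-- `w_{≤m} = s_{i_1}⋯s_{i_m}` acting on coweights. -/
def wleC {I P Pc : Type*} [AddCommGroup P] [AddCommGroup Pc]
    (pair : Pc →+ P →+ ℤ) (α : I → P) (hc : I → Pc) (idx : ℕ → I) : ℕ → Pc → Pc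
  | 0 => id
  | m + 1 => (wleC pair α hc idx m) ∘ sRefC pair α hc (idx (m + 1))

/-- The Laurent monomial `D'_{w_{≤k'}μ} = t_1^{-d_1}⋯t_{k'}^{-d_{k'}}` with
`d_m = ⟨w_{≤m} h_{i_m}, w_{≤k'} μ⟩`, as a unit in the quantum torus. -/
def Mmon {I P Pc A : Type*} [AddCommGroup P] [AddCommGroup Pc] [Ring A]
    (pair : Pc →+ P →+ ℤ) (α : I → P) (hc : I → Pc) (idx : ℕ → I) (t : ℕ → Aˣ)
    (k' : ℕ) (μ : P) : Aˣ :=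
  ((List.range k').map fun m =>
    t (m + 1) ^
      (-(pair (wleC pair α hc idx (m + 1) (hc (idx (m + 1))))
          (wle pair α hc idx k' μ)))).prod

set_option linter.unusedSectionVars false

/-- Normal-form monomial `u 1 ^ c 1 * ⋯ * u n ^ c n`. -/
def caNF {G : Type*} [Group G] (u : ℕ → G) (c : ℕ → ℤ) : ℕ → G
  | 0 => 1
  | n + 1 => caNF u c n * u (n + 1) ^ c (n + 1)

section caNFLemmas

variable {G : Type*} [Group G] (u : ℕ → G)

lemma caNF_congr (c d : ℕ → ℤ) : ∀ n, (∀ m, 1 ≤ m → m ≤ n → c m = d m) →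
    caNF u c n = caNF u d n
  | 0, _ => rfl
  | n + 1, h => by
    rw [caNF, caNF, caNF_congr c d n (fun m h1 h2 => h m h1 (h2.trans n.le_succ)),
      h (n + 1) (Nat.succ_le_succ n.zero_le) le_rfl]

lemma caNF_one (c : ℕ → ℤ) : ∀ n, (∀ m, 1 ≤ m → m ≤ n → c m = 0) → caNF u c n = 1
  | 0, _ => rfl
  | n + 1, h => by
    rw [caNF, caNF_one c n (fun m h1 h2 => h m h1 (h2.trans n.le_succ)),
      h (n + 1) (Nat.succ_le_succ n.zero_le) le_rfl, zpow_zero, one_mul]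

lemma caNF_eq_range_prod (c : ℕ → ℤ) : ∀ n,
    ((List.range n).map fun m => u (m + 1) ^ c (m + 1)).prod = caNF u c n
  | 0 => rfl
  | n + 1 => by
    rw [List.range_succ, List.map_append, List.prod_append, caNF,
      caNF_eq_range_prod c n, List.map_singleton, List.prod_singleton]

variable {L : ℕ}

lemma caNF_comm (hu : ∀ j K, 1 ≤ j → j < K → K ≤ L → Commute (u j) (u K)) (c : ℕ → ℤ) (K : ℕ) (hK : K ≤ L) :
    ∀ n, n < K → Commute (u K) (caNF u c n)
  | 0, _ => Commute.one_right _
  | n + 1, h =>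
    (caNF_comm hu c K hK n (Nat.lt_of_succ_lt h)).mul_right
      (((hu (n + 1) K (Nat.succ_le_succ n.zero_le) h hK).symm).zpow_right _)

lemma caNF_mul (hu : ∀ j K, 1 ≤ j → j < K → K ≤ L → Commute (u j) (u K)) (c d : ℕ → ℤ) : ∀ n, n ≤ L →
    caNF u c n * caNF u d n = caNF u (fun m => c m + d m) n
  | 0, _ => one_mul 1
  | n + 1, h => by
    have hcomm : Commute (u (n + 1) ^ c (n + 1)) (caNF u d n) :=
      (caNF_comm u hu d (n + 1) h n n.lt_succ_self).zpow_left _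
    rw [caNF, caNF, mul_assoc, ← mul_assoc (u (n + 1) ^ c (n + 1)), hcomm.eq,
      mul_assoc, ← zpow_add, ← mul_assoc, caNF_mul hu c d n (n.le_succ.trans h), caNF]

lemma caNF_inv (hu : ∀ j K, 1 ≤ j → j < K → K ≤ L → Commute (u j) (u K)) (c : ℕ → ℤ) : ∀ n, n ≤ L →
    (caNF u c n)⁻¹ = caNF u (fun m => -(c m)) n
  | 0, _ => inv_one
  | n + 1, h => by
    have hcomm : Commute (u (n + 1) ^ (-(c (n + 1)))) (caNF u (fun m => -(c m)) n) :=
      (caNF_comm u hu _ (n + 1) h n n.lt_succ_self).zpow_left _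
    rw [caNF, mul_inv_rev, ← zpow_neg, caNF_inv hu c n (n.le_succ.trans h), hcomm.eq, caNF]

lemma caNF_pow (hu : ∀ j K, 1 ≤ j → j < K → K ≤ L → Commute (u j) (u K)) (c : ℕ → ℤ) (n : ℕ) (hn : n ≤ L) : ∀ e : ℕ,
    caNF u c n ^ e = caNF u (fun m => (e : ℤ) * c m) n
  | 0 => by
    rw [pow_zero]
    exact (caNF_one u _ n (fun m _ _ => by push_cast; ring)).symm
  | e + 1 => by
    rw [pow_succ, caNF_pow hu c n hn e, caNF_mul u hu _ _ n hn]
    exact caNF_congr u _ _ n (fun m _ _ => by push_cast; ring)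

lemma caNF_zpow (hu : ∀ j K, 1 ≤ j → j < K → K ≤ L → Commute (u j) (u K)) (c : ℕ → ℤ) (n : ℕ) (hn : n ≤ L) (e : ℤ) :
    caNF u c n ^ e = caNF u (fun m => e * c m) n := by
  cases e with
  | ofNat e =>
    rw [Int.ofNat_eq_coe, zpow_natCast, caNF_pow u hu c n hn e]
  | negSucc e =>
    rw [zpow_negSucc, caNF_pow u hu c n hn (e + 1), caNF_inv u hu _ n hn]
    exact caNF_congr u _ _ n (fun m _ _ => by rw [Int.negSucc_eq]; push_cast; ring)

lemma caNF_pad (c : ℕ → ℤ) (n : ℕ) : ∀ n', n ≤ n' →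
    caNF u (fun m => if m ≤ n then c m else 0) n' = caNF u c n := by
  intro n' h
  induction n', h using Nat.le_induction with
  | base => exact caNF_congr u _ _ n (fun m _ h2 => by rw [if_pos h2])
  | succ n' hn ih =>
    rw [caNF, if_neg (by omega), zpow_zero, mul_one, ih]

lemma caNF_delta (k : ℕ) (hk : 1 ≤ k) : ∀ n, k ≤ n →
    caNF u (fun m => if m = k then 1 else 0) n = u k := by
  intro n h
  induction n, h using Nat.le_induction with
  | base =>
    obtain ⟨j, rfl⟩ : ∃ j, k = j + 1 := ⟨k - 1, (Nat.succ_pred_eq_of_pos hk).symm⟩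
    rw [caNF, if_pos rfl, zpow_one,
      caNF_one u _ j (fun m _ h2 => by rw [if_neg (by omega)]), one_mul]
  | succ n hn ih =>
    rw [caNF, if_neg (by omega), zpow_zero, mul_one, ih]

lemma caNF_list_prod {ι : Type*} (hu : ∀ j K, 1 ≤ j → j < K → K ≤ L → Commute (u j) (u K)) (n : ℕ) (hn : n ≤ L) :
    ∀ (l : List ι) (f : ι → G) (g : ι → ℕ → ℤ), (∀ j ∈ l, f j = caNF u (g j) n) →
      (l.map f).prod = caNF u (fun m => (l.map fun j => g j m).sum) n
  | [], f, g, _ => by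
    simp only [List.map_nil, List.prod_nil, List.sum_nil]
    exact (caNF_one u _ n (fun m _ _ => rfl)).symm
  | a :: l, f, g, hf => by
    rw [List.map_cons, List.prod_cons, hf a List.mem_cons_self,
      caNF_list_prod hu n hn l f g (fun j hj => hf j (List.mem_cons_of_mem a hj)),
      caNF_mul u hu _ _ n hn]
    exact caNF_congr u _ _ n (fun m _ _ => by simp)

end caNFLemmas

section weights

variable {I P Pc : Type*} [AddCommGroup P] [AddCommGroup Pc]
  (pair : Pc →+ P →+ ℤ) (α : I → P) (hc : I → Pc)

/-- `sRef` as an additive group homomorphism. -/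
def sRefHom (i : I) : P →+ P :=
  AddMonoidHom.mk' (sRef pair α hc i) (fun a b => by
    simp only [sRef, map_add, add_smul]; abel)

@[simp] lemma sRefHom_apply (i : I) (μ : P) :
    sRefHom pair α hc i μ = sRef pair α hc i μ := rfl

variable (idx : ℕ → I)

/-- `s_{i_{m+1}}⋯s_{i_{k'}}` as an additive group homomorphism. -/
def wleTailHom (m : ℕ) : ℕ → P →+ P
  | 0 => AddMonoidHom.id P
  | n + 1 =>
    if n + 1 ≤ m then AddMonoidHom.id P
    else (wleTailHom m n).comp (sRefHom pair α hc (idx (n + 1)))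

lemma wleTailHom_self (m : ℕ) : wleTailHom pair α hc idx m m = AddMonoidHom.id P := by
  cases m with
  | zero => rfl
  | succ n => rw [wleTailHom, if_pos le_rfl]

lemma wleTailHom_succ (m n : ℕ) (h : m ≤ n) :
    wleTailHom pair α hc idx m (n + 1) =
      (wleTailHom pair α hc idx m n).comp (sRefHom pair α hc (idx (n + 1))) := by
  rw [wleTailHom, if_neg (by omega)]

lemma wle_eq_tail (m : ℕ) {k' : ℕ} (h : m ≤ k') (μ : P) :
    wle pair α hc idx k' μ =
      wle pair α hc idx m (wleTailHom pair α hc idx m k' μ) := by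
  induction k', h using Nat.le_induction generalizing μ with
  | base => rw [wleTailHom_self]; rfl
  | succ n hn ih =>
    rw [wleTailHom_succ pair α hc idx m n hn]
    show wle pair α hc idx n (sRef pair α hc (idx (n + 1)) μ) = _
    rw [ih]
    rfl

lemma pair_wle : ∀ (m : ℕ),
    (∀ i (x : Pc) (μ : P),
      pair (sRefC pair α hc i x) (sRef pair α hc i μ) = pair x μ) →
    ∀ (x : Pc) (μ : P),
      pair (wleC pair α hc idx m x) (wle pair α hc idx m μ) = pair x μ
  | 0, _, x, μ => rfl
  | m + 1, hinv, x, μ => by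
    show pair (wleC pair α hc idx m (sRefC pair α hc (idx (m + 1)) x))
        (wle pair α hc idx m (sRef pair α hc (idx (m + 1)) μ)) = _
    rw [pair_wle m hinv, hinv]

lemma pair_wle_tail (m : ℕ) {k' : ℕ} (h : m ≤ k')
    (hinv : ∀ i (x : Pc) (μ : P),
      pair (sRefC pair α hc i x) (sRef pair α hc i μ) = pair x μ)
    (x : Pc) (μ : P) :
    pair (wleC pair α hc idx m x) (wle pair α hc idx k' μ) =
      pair x (wleTailHom pair α hc idx m k' μ) := by
  rw [wle_eq_tail pair α hc idx m h, pair_wle pair α hc idx m hinv]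

end weights

lemma exponent_key {I P Pc : Type*} [Fintype I] [DecidableEq I]
    [AddCommGroup P] [AddCommGroup Pc]
    (pair : Pc →+ P →+ ℤ) (α ϖ : I → P) (hc : I → Pc)
    (hinv : ∀ i (x : Pc) (μ : P),
      pair (sRefC pair α hc i x) (sRef pair α hc i μ) = pair x μ)
    (haii : ∀ i, pair (hc i) (α i) = 2)
    (hϖ : ∀ i j, pair (hc i) (ϖ j) = if i = j then 1 else 0)
    (hα : ∀ i', α i' = ∑ j : I, pair (hc j) (α i') • ϖ j)
    (idx : ℕ → I) (j m : ℕ) (hm1 : 1 ≤ m) (hmk : m ≤ j + 1) :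
    (if m ≤ j then
        pair (wleC pair α hc idx m (hc (idx m))) (wle pair α hc idx j (ϖ (idx (j + 1))))
      else 0)
      + pair (wleC pair α hc idx m (hc (idx m)))
          (wle pair α hc idx (j + 1) (ϖ (idx (j + 1))))
      + ((Finset.univ.erase (idx (j + 1))).toList.map fun j' =>
          pair (hc j') (α (idx (j + 1))) *
            pair (wleC pair α hc idx m (hc (idx m)))
              (wle pair α hc idx (j + 1) (ϖ j'))).sum
      = if m = j + 1 then 1 else 0 := by
  set i := idx (j + 1) with hi
  rcases eq_or_lt_of_le hmk with hm | hm
  · -- m = j + 1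
    subst hm
    rw [if_neg (by omega), if_pos rfl, pair_wle pair α hc idx _ hinv, hϖ, if_pos rfl]
    have hz : ((Finset.univ.erase i).toList.map fun j' =>
        pair (hc j') (α i) *
          pair (wleC pair α hc idx (j + 1) (hc i)) (wle pair α hc idx (j + 1) (ϖ j'))).sum
        = 0 := by
      apply List.sum_eq_zero
      intro x hx
      rcases List.mem_map.mp hx with ⟨j', hj', rfl⟩
      rw [pair_wle pair α hc idx _ hinv, hϖ,
        if_neg (Finset.ne_of_mem_erase (Finset.mem_toList.mp hj')).symm, mul_zero]
    rw [hz, add_zero, zero_add]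
  · -- m ≤ j
    have hmj : m ≤ j := by omega
    have hmj1 : m ≤ j + 1 := by omega
    rw [if_pos hmj, if_neg (by omega)]
    have hT := wleTailHom_succ pair α hc idx m j hmj
    have hfix : ∀ j' ∈ Finset.univ.erase i, sRef pair α hc i (ϖ j') = ϖ j' := by
      intro j' hj'
      rw [sRef, hϖ, if_neg (Finset.ne_of_mem_erase hj').symm, zero_smul, sub_zero]
    have hsum : ((Finset.univ.erase i).toList.map fun j' =>
        pair (hc j') (α i) *
          pair (wleC pair α hc idx m (hc (idx m))) (wle pair α hc idx (j + 1) (ϖ j'))).sum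
        = pair (wleC pair α hc idx m (hc (idx m)))
            (wle pair α hc idx m (wleTailHom pair α hc idx m j
              (∑ j' ∈ Finset.univ.erase i, pair (hc j') (α i) • ϖ j'))) := by
      rw [Finset.sum_map_toList, pair_wle pair α hc idx m hinv, map_sum, map_sum]
      refine Finset.sum_congr rfl fun j' hj' => ?_
      rw [map_zsmul, map_zsmul, smul_eq_mul,
        pair_wle_tail pair α hc idx m hmj1 hinv,
        hT, AddMonoidHom.comp_apply, sRefHom_apply, hfix j' hj']
    rw [hsum, pair_wle pair α hc idx m hinv,
      pair_wle_tail pair α hc idx m hmj hinv,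
      pair_wle_tail pair α hc idx m hmj1 hinv,
      hT, AddMonoidHom.comp_apply, sRefHom_apply]
    simp only [← map_add]
    have h2 := Finset.add_sum_erase Finset.univ
      (fun j' => pair (hc j') (α i) • ϖ j') (Finset.mem_univ i)
    simp only [haii, ← hα i] at h2
    have h3 : ∑ j' ∈ Finset.univ.erase i, pair (hc j') (α i) • ϖ j'
        = α i - (2 : ℤ) • ϖ i := eq_sub_of_add_eq' h2
    have hW : ϖ i + sRef pair α hc i (ϖ i)
        + ∑ j' ∈ Finset.univ.erase i, pair (hc j') (α i) • ϖ j' = 0 := by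
      rw [h3, sRef, hϖ, if_pos rfl, one_smul, two_zsmul]
      abel
    rw [hW, map_zero, map_zero]


section Glue

variable {I P Pc A G : Type*} [Fintype I] [DecidableEq I]
  [AddCommGroup P] [AddCommGroup Pc] [Ring A] [Group G]

lemma phi_Mmon (pair : Pc →+ P →+ ℤ) (α : I → P) (hc : I → Pc) (idx : ℕ → I)
    (t : ℕ → Aˣ) (φ : Aˣ →* G) (k' : ℕ) (μ : P) :
    φ (Mmon pair α hc idx t k' μ) =
      caNF (fun m => φ (t m))
        (fun m => -(pair (wleC pair α hc idx m (hc (idx m)))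
          (wle pair α hc idx k' μ))) k' := by
  rw [Mmon, map_list_prod, List.map_map, ← caNF_eq_range_prod]
  simp only [Function.comp_def, map_zpow]

lemma main_core (pair : Pc →+ P →+ ℤ) (α ϖ : I → P) (hc : I → Pc)
    (hinv : ∀ i (x : Pc) (μ : P),
      pair (sRefC pair α hc i x) (sRef pair α hc i μ) = pair x μ)
    (haii : ∀ i, pair (hc i) (α i) = 2)
    (hϖ : ∀ i j, pair (hc i) (ϖ j) = if i = j then 1 else 0)
    (hα : ∀ i', α i' = ∑ j : I, pair (hc j) (α i') • ϖ j)
    (ℓ : ℕ) (idx : ℕ → I) (t : ℕ → Aˣ) (φ : Aˣ →* G)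
    (hu : ∀ a b : ℕ, 1 ≤ a → a < b → b ≤ ℓ →
      Commute ((fun m => φ (t m)) a) ((fun m => φ (t m)) b))
    (j : ℕ) (hkl : j + 1 ≤ ℓ) :
    φ ((Mmon pair α hc idx t j (ϖ (idx (j + 1))))⁻¹ *
        (Mmon pair α hc idx t (j + 1) (ϖ (idx (j + 1))))⁻¹ *
        ((Finset.univ.erase (idx (j + 1))).toList.map fun j' =>
          Mmon pair α hc idx t (j + 1) (ϖ j') ^ (-(pair (hc j') (α (idx (j + 1)))))).prod)
      = φ (t (j + 1)) := by
  have hjl : j ≤ ℓ := by omega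
  have e1 : (φ (Mmon pair α hc idx t j (ϖ (idx (j + 1)))))⁻¹
      = caNF (fun m => φ (t m))
          (fun m => if m ≤ j then
            pair (wleC pair α hc idx m (hc (idx m)))
              (wle pair α hc idx j (ϖ (idx (j + 1)))) else 0) (j + 1) := by
    rw [phi_Mmon pair α hc idx t φ j (ϖ (idx (j + 1))),
      caNF_inv (fun m => φ (t m)) hu _ j hjl]
    exact (caNF_congr (fun m => φ (t m)) _
        (fun m => pair (wleC pair α hc idx m (hc (idx m)))
          (wle pair α hc idx j (ϖ (idx (j + 1))))) j
        (fun m _ _ => neg_neg _)).trans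
      (caNF_pad (fun m => φ (t m)) _ j (j + 1) (Nat.le_succ j)).symm
  have e2 : (φ (Mmon pair α hc idx t (j + 1) (ϖ (idx (j + 1)))))⁻¹
      = caNF (fun m => φ (t m))
          (fun m => pair (wleC pair α hc idx m (hc (idx m)))
            (wle pair α hc idx (j + 1) (ϖ (idx (j + 1))))) (j + 1) := by
    rw [phi_Mmon pair α hc idx t φ (j + 1) (ϖ (idx (j + 1))),
      caNF_inv (fun m => φ (t m)) hu _ (j + 1) hkl]
    exact caNF_congr (fun m => φ (t m)) _ _ (j + 1) (fun m _ _ => neg_neg _)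
  have e3 : φ (((Finset.univ.erase (idx (j + 1))).toList.map fun j' =>
        Mmon pair α hc idx t (j + 1) (ϖ j') ^ (-(pair (hc j') (α (idx (j + 1)))))).prod)
      = caNF (fun m => φ (t m))
          (fun m => ((Finset.univ.erase (idx (j + 1))).toList.map fun j' =>
            pair (hc j') (α (idx (j + 1))) *
              pair (wleC pair α hc idx m (hc (idx m)))
                (wle pair α hc idx (j + 1) (ϖ j'))).sum) (j + 1) := by
    rw [map_list_prod, List.map_map]
    refine caNF_list_prod (fun m => φ (t m)) hu (j + 1) hkl _ _
      (fun j' m => pair (hc j') (α (idx (j + 1))) *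
        pair (wleC pair α hc idx m (hc (idx m))) (wle pair α hc idx (j + 1) (ϖ j'))) ?_
    intro j' _
    show φ (Mmon pair α hc idx t (j + 1) (ϖ j') ^ (-(pair (hc j') (α (idx (j + 1)))))) = _
    rw [map_zpow, phi_Mmon pair α hc idx t φ (j + 1) (ϖ j'),
      caNF_zpow (fun m => φ (t m)) hu _ (j + 1) hkl]
    exact caNF_congr (fun m => φ (t m)) _ _ (j + 1) (fun m _ _ => neg_mul_neg _ _)
  rw [map_mul, map_mul, map_inv, map_inv, e1, e2, e3,
    caNF_mul (fun m => φ (t m)) hu _ _ (j + 1) hkl,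
    caNF_mul (fun m => φ (t m)) hu _ _ (j + 1) hkl]
  refine (caNF_congr (fun m => φ (t m)) _ (fun m => if m = j + 1 then 1 else 0) (j + 1)
    ?_).trans (caNF_delta (fun m => φ (t m)) (j + 1) (by omega) (j + 1) le_rfl)
  intro m h1 h2
  exact exponent_key pair α ϖ hc hinv haii hϖ hα idx j m h1 h2

end Glue

/-- Quantum Chamber Ansatz: the variable `t_k` is recovered, up to a power of `q`, as
`t_k ≃ (D'_{w_{≤k-1}ϖ_{i_k}})^{-1}(D'_{w_{≤k}ϖ_{i_k}})^{-1}
  ∏_{j ≠ i_k}(D'_{w_{≤k}ϖ_j})^{-a_{j,i_k}}`. -/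
theorem chamber_ansatz_recovery {I P Pc A : Type*} [Fintype I] [DecidableEq I]
    [AddCommGroup P] [AddCommGroup Pc] [Ring A]
    (pair : Pc →+ P →+ ℤ) (α ϖ : I → P) (hc : I → Pc)
    (hinv : ∀ i (x : Pc) (μ : P),
      pair (sRefC pair α hc i x) (sRef pair α hc i μ) = pair x μ)
    (haii : ∀ i, pair (hc i) (α i) = 2)
    (hϖ : ∀ i j, pair (hc i) (ϖ j) = if i = j then 1 else 0)
    (hα : ∀ i', α i' = ∑ j : I, pair (hc j) (α i') • ϖ j)
    (ℓ : ℕ) (idx : ℕ → I)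
    (q : Aˣ) (t : ℕ → Aˣ) (hq : ∀ a : A, ↑q * a = a * ↑q)
    (β : I → I → ℤ)
    (hrel : ∀ j k : ℕ, 1 ≤ j → j < k → k ≤ ℓ →
      (t j : A) * t k = ↑(q ^ β (idx j) (idx k)) * t k * t j)
    (k : ℕ) (hk : 1 ≤ k) (hkl : k ≤ ℓ) :
    ∃ N : ℤ,
      (Mmon pair α hc idx t (k - 1) (ϖ (idx k)))⁻¹ *
          (Mmon pair α hc idx t k (ϖ (idx k)))⁻¹ *
          ((Finset.univ.erase (idx k)).toList.map fun j =>
            (Mmon pair α hc idx t k (ϖ j)) ^ (-(pair (hc j) (α (idx k))))).prod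
        = q ^ N * t k := by
  obtain ⟨j, rfl⟩ : ∃ j, k = j + 1 := ⟨k - 1, (Nat.succ_pred_eq_of_pos hk).symm⟩
  simp only [Nat.add_sub_cancel]
  have hqc : ∀ v : Aˣ, Commute q v := fun v =>
    Units.ext (by simp only [Units.val_mul]; exact hq v)
  haveI : (Subgroup.zpowers q).Normal := by
    constructor
    intro n hn g
    obtain ⟨w, rfl⟩ := Subgroup.mem_zpowers_iff.mp hn
    have hcomm : g * q ^ w = q ^ w * g := (((hqc g).zpow_left w).eq).symm
    have hgq : g * q ^ w * g⁻¹ = q ^ w := by rw [hcomm, mul_assoc]; simp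
    rw [hgq]
    exact Subgroup.zpow_mem _ (Subgroup.mem_zpowers q) w
  have hu : ∀ a b : ℕ, 1 ≤ a → a < b → b ≤ ℓ →
      Commute ((fun m => (QuotientGroup.mk' (Subgroup.zpowers q)) (t m)) a)
        ((fun m => (QuotientGroup.mk' (Subgroup.zpowers q)) (t m)) b) := by
    intro a b h1 h2 h3
    have hr : t a * t b = q ^ β (idx a) (idx b) * (t b * t a) := by
      apply Units.ext
      simp only [Units.val_mul]
      rw [hrel a b h1 h2 h3, mul_assoc]
    have hφq : (QuotientGroup.mk' (Subgroup.zpowers q)) q = 1 :=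
      (QuotientGroup.eq_one_iff q).mpr (Subgroup.mem_zpowers q)
    have : (QuotientGroup.mk' (Subgroup.zpowers q)) (t a) *
          (QuotientGroup.mk' (Subgroup.zpowers q)) (t b)
        = (QuotientGroup.mk' (Subgroup.zpowers q)) (t b) *
          (QuotientGroup.mk' (Subgroup.zpowers q)) (t a) := by
      rw [← map_mul, hr, map_mul, map_zpow, hφq, one_zpow, one_mul, map_mul]
    exact this
  have key := main_core pair α ϖ hc hinv haii hϖ hα ℓ idx t
    (QuotientGroup.mk' (Subgroup.zpowers q)) hu j hkl
  rw [QuotientGroup.mk'_eq_mk'] at key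
  obtain ⟨z, hz, hzeq⟩ := key
  obtain ⟨w, rfl⟩ := Subgroup.mem_zpowers_iff.mp hz
  refine ⟨-w, ?_⟩
  rw [← hzeq, ← ((hqc _).zpow_left w).eq, ← mul_assoc, ← zpow_add]
  simp
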